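/- If the transfinite sequences CT_α, PT_α reach a fixed point λ (CT_λ = CT_{λ+1} = F(PT_λ) and PT_λ = PT_{λ+1} = F(CT_λ)), then the pair ⟨CT_λ, PT_λ⟩ is the least stable pair: for any pair ⟨C, Pt⟩ with C ⊆ Pt, C = F(Pt) and Pt = F(C), we have CT_λ ⊆ C and Pt ⊆ PT_λ. -/

import Mathlib

open Set

/-- If the transfinite sequences reach a fixed point `l`, then
`⟨CT l, PT l⟩` is the least stable pair. -/
theorem stmt_13 {U : Type*} (F : Set U → Set U)
    (hF : ∀ S T : Set U, S ⊆ T → F T ⊆ F S)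
    (CT PT : Ordinal → Set U)
    (hCT0 : CT 0 = ∅) (hPT0 : PT 0 = Set.univ)
    (hCTsucc : ∀ α, CT (α + 1) = F (PT α))
    (hPTsucc : ∀ α, PT (α + 1) = F (CT α))
    (hCTlim : ∀ α, Order.IsSuccLimit α → CT α = ⋃ β ∈ Set.Iio α, CT β)
    (hPTlim : ∀ α, Order.IsSuccLimit α → PT α = ⋂ β ∈ Set.Iio α, PT β)
    (l : Ordinal)
    (hfixC : CT l = CT (l + 1)) (hfixP : PT l = PT (l + 1)) :
    ∀ C Pt : Set U, C ⊆ Pt → C = F Pt → Pt = F C →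
      CT l ⊆ C ∧ Pt ⊆ PT l := by
  intro C Pt hCP hCF hPF
  have key : ∀ α : Ordinal, CT α ⊆ C ∧ Pt ⊆ PT α := by
    intro α
    induction α using Ordinal.induction with
    | h α ih =>
      rcases Ordinal.zero_or_succ_or_isSuccLimit α with h0 | ⟨β, rfl⟩ | hlim
      · subst h0
        simp [hCT0, hPT0]
      · obtain ⟨h1, h2⟩ := ih β (Order.lt_succ β)
        constructor
        · rw [← Ordinal.add_one_eq_succ, hCTsucc, hCF]; exact hF _ _ h2
        · rw [← Ordinal.add_one_eq_succ, hPTsucc, hPF]; exact hF _ _ h1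
      · constructor
        · rw [hCTlim α hlim]
          exact Set.iUnion₂_subset fun β hβ => (ih β hβ).1
        · rw [hPTlim α hlim]
          exact Set.subset_iInter₂ fun β hβ => (ih β hβ).2
  exact key l
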